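/- Let R be the Z-algebra generated by u₁,…,u_m, t₁,…,t_m with deg u_i = 1, deg t_i = 0, subject to u_i t_i = u_i, t_i u_i = 0, u_i t_j = t_j u_i (i≠j), t_i² = t_i, u_i² = 0, u_i u_j = −u_j u_i (i≠j), t_i t_j = t_j t_i. Then as a Z-module, R is free with basis the square-free monomials u_σ t_{ω∖σ} for σ ⊆ ω ⊆ [m]. -/

import Mathlib

open Finset

noncomputable section

/-- The free ℤ-algebra on generators `u₁,…,u_m` (left summand) and `t₁,…,t_m`
(right summand). -/
abbrev FA (m : ℕ) := FreeAlgebra ℤ (Fin m ⊕ Fin m)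

def uf (m : ℕ) (i : Fin m) : FA m := FreeAlgebra.ι ℤ (Sum.inl i)
def tf (m : ℕ) (i : Fin m) : FA m := FreeAlgebra.ι ℤ (Sum.inr i)

/-- The defining relations of the algebra `R`:
`uᵢtᵢ = uᵢ`, `tᵢuᵢ = 0`, `uᵢtⱼ = tⱼuᵢ` (i ≠ j), `tᵢ² = tᵢ`, `uᵢ² = 0`,
`uᵢuⱼ = −uⱼuᵢ` (i ≠ j), `tᵢtⱼ = tⱼtᵢ`. -/
inductive RRel (m : ℕ) : FA m → FA m → Prop
  | ut_same (i : Fin m) : RRel m (uf m i * tf m i) (uf m i)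
  | tu_same (i : Fin m) : RRel m (tf m i * uf m i) 0
  | ut_comm {i j : Fin m} (h : i ≠ j) : RRel m (uf m i * tf m j) (tf m j * uf m i)
  | tt_same (i : Fin m) : RRel m (tf m i * tf m i) (tf m i)
  | uu_same (i : Fin m) : RRel m (uf m i * uf m i) 0
  | uu_anti {i j : Fin m} (h : i ≠ j) : RRel m (uf m i * uf m j) (-(uf m j * uf m i))
  | tt_comm (i j : Fin m) : RRel m (tf m i * tf m j) (tf m j * tf m i)

/-- The algebra `R`: the quotient of the free algebra by the relations above. -/
abbrev RAlg (m : ℕ) := RingQuot (RRel m)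

def uq (m : ℕ) (i : Fin m) : RAlg m := RingQuot.mkRingHom (RRel m) (uf m i)
def tq (m : ℕ) (i : Fin m) : RAlg m := RingQuot.mkRingHom (RRel m) (tf m i)

/-- `u_σ`: the product of the `u_i`, `i ∈ σ`, in increasing order. -/
def uProd (m : ℕ) (σ : Finset (Fin m)) : RAlg m :=
  ((σ.sort (· ≤ ·)).map (uq m)).prod

/-- `t_τ`: the product of the `t_i`, `i ∈ τ`, in increasing order. -/
def tProd (m : ℕ) (τ : Finset (Fin m)) : RAlg m :=
  ((τ.sort (· ≤ ·)).map (tq m)).prod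

/-- The square-free monomial `u_σ t_{ω∖σ}` indexed by a pair `σ ⊆ ω ⊆ [m]`. -/
def rMonomial (m : ℕ) (p : {q : Finset (Fin m) × Finset (Fin m) // q.1 ⊆ q.2}) :
    RAlg m :=
  uProd m p.1.1 * tProd m (p.1.2 \ p.1.1)

abbrev Idx (m : ℕ) := {q : Finset (Fin m) × Finset (Fin m) // q.1 ⊆ q.2}
abbrev MM (m : ℕ) := Idx m →₀ ℤ

def EE {m : ℕ} (σ ω : Finset (Fin m)) (h : σ ⊆ ω) : MM m := Finsupp.single ⟨(σ, ω), h⟩ 1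

lemma EE_congr {m : ℕ} {σ σ' ω ω' : Finset (Fin m)} (h : σ ⊆ ω) (h' : σ' ⊆ ω')
    (e1 : σ = σ') (e2 : ω = ω') : EE σ ω h = EE σ' ω' h' := by subst e1; subst e2; rfl

def sgn {m : ℕ} (i : Fin m) (σ : Finset (Fin m)) : ℤ := (-1 : ℤ) ^ (σ.filter (· < i)).card

def UU {m : ℕ} (i : Fin m) : MM m →ₗ[ℤ] MM m :=
  Finsupp.lift (MM m) ℤ (Idx m) fun p =>
    if h : i ∈ p.1.1 then 0
    else sgn i p.1.1 • EE (insert i p.1.1) (insert i p.1.2) (Finset.insert_subset_insert i p.2)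

def TT {m : ℕ} (i : Fin m) : MM m →ₗ[ℤ] MM m :=
  Finsupp.lift (MM m) ℤ (Idx m) fun p =>
    if i ∈ p.1.1 then 0
    else EE p.1.1 (insert i p.1.2) (p.2.trans (Finset.subset_insert i p.1.2))

lemma UU_apply {m : ℕ} (i : Fin m) (σ ω : Finset (Fin m)) (h : σ ⊆ ω) :
    UU i (EE σ ω h) = if hm : i ∈ σ then 0
      else sgn i σ • EE (insert i σ) (insert i ω) (Finset.insert_subset_insert i h) := by
  rw [UU, Finsupp.lift_apply, EE, Finsupp.sum_single_index (by simp), one_smul]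

lemma TT_apply {m : ℕ} (i : Fin m) (σ ω : Finset (Fin m)) (h : σ ⊆ ω) :
    TT i (EE σ ω h) = if i ∈ σ then 0
      else EE σ (insert i ω) (h.trans (Finset.subset_insert i ω)) := by
  rw [TT, Finsupp.lift_apply, EE, Finsupp.sum_single_index (by simp), one_smul]

lemma MM_ext {m : ℕ} {φ ψ : MM m →ₗ[ℤ] MM m}
    (h : ∀ σ ω (hs : σ ⊆ ω), φ (EE σ ω hs) = ψ (EE σ ω hs)) : φ = ψ := by
  apply Finsupp.lhom_ext
  rintro ⟨⟨σ, ω⟩, hs⟩ b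
  have hb : (Finsupp.single (⟨(σ, ω), hs⟩ : Idx m) b) = b • EE σ ω hs := by
    simp [EE, Finsupp.smul_single]
  rw [hb, map_smul, map_smul, h]

lemma sgn_insert {m : ℕ} {i j : Fin m} {σ : Finset (Fin m)} (hij : j ≠ i) (hj : j ∉ σ) :
    sgn i (insert j σ) = (if j < i then -1 else 1) * sgn i σ := by
  rw [sgn, sgn, Finset.filter_insert]
  split_ifs with h
  · rw [Finset.card_insert_of_notMem (by simp [hj]), pow_succ]
    ring
  · rw [one_mul]

lemma sgn_identity {m : ℕ} {i j : Fin m} {σ : Finset (Fin m)} (hij : i ≠ j)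
    (hi : i ∉ σ) (hj : j ∉ σ) :
    sgn j σ * sgn i (insert j σ) = -(sgn i σ * sgn j (insert i σ)) := by
  rw [sgn_insert hij.symm hj, sgn_insert hij hi]
  rcases lt_or_gt_of_ne hij with h | h
  · rw [if_neg (by omega), if_pos h]; ring
  · rw [if_pos h, if_neg (by omega)]; ring

lemma rel_UT {m : ℕ} (i : Fin m) : UU i ∘ₗ TT i = UU i := by
  apply MM_ext; intro σ ω hs
  by_cases hi : i ∈ σ
  · simp [TT_apply, UU_apply, hi]
  · rw [LinearMap.comp_apply, TT_apply, if_neg hi, UU_apply, UU_apply, dif_neg hi, dif_neg hi]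
    exact congrArg _ (EE_congr _ _ rfl (by simp))

lemma rel_TU {m : ℕ} (i : Fin m) : TT i ∘ₗ UU i = 0 := by
  apply MM_ext; intro σ ω hs
  by_cases hi : i ∈ σ
  · simp [UU_apply, hi]
  · rw [LinearMap.comp_apply, UU_apply, dif_neg hi, map_smul, TT_apply,
      if_pos (Finset.mem_insert_self i σ), smul_zero, LinearMap.zero_apply]

lemma rel_UTc {m : ℕ} {i j : Fin m} (h : i ≠ j) : UU i ∘ₗ TT j = TT j ∘ₗ UU i := by
  apply MM_ext; intro σ ω hs
  by_cases hj : j ∈ σ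
  · by_cases hi : i ∈ σ
    · simp [TT_apply, UU_apply, hi, hj]
    · rw [LinearMap.comp_apply, LinearMap.comp_apply, TT_apply, if_pos hj, UU_apply,
        dif_neg hi, map_zero, map_smul, TT_apply, if_pos (Finset.mem_insert_of_mem hj),
        smul_zero]
  · by_cases hi : i ∈ σ
    · rw [LinearMap.comp_apply, LinearMap.comp_apply, TT_apply, if_neg hj, UU_apply,
        dif_pos hi, UU_apply, dif_pos hi, map_zero]
    · rw [LinearMap.comp_apply, LinearMap.comp_apply, TT_apply, if_neg hj, UU_apply,
        dif_neg hi, UU_apply, dif_neg hi, map_smul, TT_apply,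
        if_neg (by simp [hj, h.symm])]
      exact congrArg _ (EE_congr _ _ rfl (Finset.insert_comm i j ω))

lemma rel_TTs {m : ℕ} (i : Fin m) : TT i ∘ₗ TT i = TT i := by
  apply MM_ext; intro σ ω hs
  by_cases hi : i ∈ σ
  · simp [TT_apply, hi]
  · rw [LinearMap.comp_apply, TT_apply, if_neg hi, TT_apply, if_neg hi]
    exact EE_congr _ _ rfl (by simp)

lemma rel_UUs {m : ℕ} (i : Fin m) : UU i ∘ₗ UU i = 0 := by
  apply MM_ext; intro σ ω hs
  by_cases hi : i ∈ σ
  · simp [UU_apply, hi]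
  · rw [LinearMap.comp_apply, UU_apply, dif_neg hi, map_smul, UU_apply,
      dif_pos (Finset.mem_insert_self i σ), smul_zero, LinearMap.zero_apply]

lemma rel_UUa {m : ℕ} {i j : Fin m} (h : i ≠ j) : UU i ∘ₗ UU j = -(UU j ∘ₗ UU i) := by
  apply MM_ext; intro σ ω hs
  rw [LinearMap.comp_apply, LinearMap.neg_apply, LinearMap.comp_apply]
  by_cases hj : j ∈ σ
  · by_cases hi : i ∈ σ
    · simp [UU_apply, hi, hj]
    · rw [UU_apply, dif_pos hj, map_zero, UU_apply, dif_neg hi, map_smul, UU_apply,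
        dif_pos (Finset.mem_insert_of_mem hj), smul_zero, neg_zero]
  · by_cases hi : i ∈ σ
    · rw [UU_apply, dif_neg hj, map_smul, UU_apply, dif_pos (Finset.mem_insert_of_mem hi),
        smul_zero, UU_apply, dif_pos hi, map_zero, neg_zero]
    · rw [UU_apply, dif_neg hj, map_smul, UU_apply, dif_neg (by simp [hi, h]),
        UU_apply, dif_neg hi, map_smul, UU_apply, dif_neg (by simp [hj, h.symm]),
        smul_smul, smul_smul, ← neg_smul, sgn_identity h hi hj]
      exact congrArg _ (EE_congr _ _ (Finset.insert_comm i j σ) (Finset.insert_comm i j ω))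

lemma rel_TTc {m : ℕ} (i j : Fin m) : TT i ∘ₗ TT j = TT j ∘ₗ TT i := by
  apply MM_ext; intro σ ω hs
  rw [LinearMap.comp_apply, LinearMap.comp_apply]
  by_cases hj : j ∈ σ <;> by_cases hi : i ∈ σ <;>
    simp only [TT_apply, if_pos, if_neg, hi, hj, if_true, if_false, map_zero]
  exact EE_congr _ _ rfl (Finset.insert_comm i j ω)

def rho0 (m : ℕ) : FA m →ₐ[ℤ] Module.End ℤ (MM m) :=
  FreeAlgebra.lift ℤ (Sum.elim (fun i => UU i) (fun i => TT i))

lemma rho0_u (m : ℕ) (i : Fin m) : rho0 m (uf m i) = UU i := by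
  simp [rho0, uf]

lemma rho0_t (m : ℕ) (i : Fin m) : rho0 m (tf m i) = TT i := by
  simp [rho0, tf]

lemma rho0_rel (m : ℕ) : ∀ ⦃x y : FA m⦄, RRel m x y → rho0 m x = rho0 m y := by
  intro x y r
  cases r with
  | ut_same i =>
      rw [map_mul, rho0_u, rho0_t, Module.End.mul_eq_comp, rel_UT]
  | tu_same i =>
      rw [map_mul, rho0_u, rho0_t, Module.End.mul_eq_comp, rel_TU, map_zero]
  | ut_comm h =>
      rw [map_mul, map_mul, rho0_u, rho0_t, Module.End.mul_eq_comp,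
        Module.End.mul_eq_comp, rel_UTc h]
  | tt_same i =>
      rw [map_mul, rho0_t, Module.End.mul_eq_comp, rel_TTs]
  | uu_same i =>
      rw [map_mul, rho0_u, Module.End.mul_eq_comp, rel_UUs, map_zero]
  | uu_anti h =>
      rw [map_mul, map_neg, map_mul, rho0_u, rho0_u, Module.End.mul_eq_comp,
        Module.End.mul_eq_comp, rel_UUa h]
  | tt_comm i j =>
      rw [map_mul, map_mul, rho0_t, rho0_t, Module.End.mul_eq_comp,
        Module.End.mul_eq_comp, rel_TTc]

def rho (m : ℕ) : RAlg m →ₐ[ℤ] Module.End ℤ (MM m) :=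
  RingQuot.liftAlgHom ℤ ⟨rho0 m, rho0_rel m⟩

lemma mkAlgHom_eq (m : ℕ) (x : FA m) :
    RingQuot.mkAlgHom ℤ (RRel m) x = RingQuot.mkRingHom (RRel m) x := by
  rw [← RingQuot.mkAlgHom_coe ℤ (RRel m)]; rfl

lemma rho_u (m : ℕ) (i : Fin m) : rho m (uq m i) = UU i := by
  rw [uq, ← mkAlgHom_eq, rho, RingQuot.liftAlgHom_mkAlgHom_apply, rho0_u]

lemma rho_t (m : ℕ) (i : Fin m) : rho m (tq m i) = TT i := by
  rw [tq, ← mkAlgHom_eq, rho, RingQuot.liftAlgHom_mkAlgHom_apply, rho0_t]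

lemma rho_t_list (m : ℕ) (l : List (Fin m)) (σ ω : Finset (Fin m)) (h : σ ⊆ ω)
    (hl : ∀ i ∈ l, i ∉ σ) :
    rho m ((l.map (tq m)).prod) (EE σ ω h) =
      EE σ (ω ∪ l.toFinset) (h.trans Finset.subset_union_left) := by
  induction l with
  | nil => simp
  | cons i l ih =>
      rw [List.map_cons, List.prod_cons, map_mul, Module.End.mul_apply,
        ih (fun a ha => hl a (List.mem_cons_of_mem i ha)), rho_t,
        TT_apply, if_neg (hl i (List.mem_cons_self))]
      exact EE_congr _ _ rfl (by simp [Finset.union_insert])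

lemma rho_u_list (m : ℕ) (l : List (Fin m)) (σ ω : Finset (Fin m)) (h : σ ⊆ ω)
    (hsort : l.Pairwise (· < ·)) (hlt : ∀ i ∈ l, ∀ j ∈ σ, i < j) :
    rho m ((l.map (uq m)).prod) (EE σ ω h) =
      EE (σ ∪ l.toFinset) (ω ∪ l.toFinset)
        (Finset.union_subset_union h (le_refl _)) := by
  induction l with
  | nil => simp
  | cons i l ih =>
      have hisort : ∀ a ∈ l, i < a := fun a ha => (List.pairwise_cons.1 hsort).1 a ha
      have hnotin : i ∉ σ ∪ l.toFinset := by
        simp only [Finset.mem_union, List.mem_toFinset]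
        rintro (hi | hi)
        · exact absurd (hlt i (List.mem_cons_self) i hi) (lt_irrefl i)
        · exact absurd (hisort i hi) (lt_irrefl i)
      have hsgn : sgn i (σ ∪ l.toFinset) = 1 := by
        rw [sgn, Finset.filter_eq_empty_iff.2, Finset.card_empty, pow_zero]
        intro j hj
        simp only [Finset.mem_union, List.mem_toFinset] at hj
        rcases hj with hj | hj
        · exact not_lt.2 (le_of_lt (hlt i (List.mem_cons_self) j hj))
        · exact not_lt.2 (le_of_lt (hisort j hj))
      rw [List.map_cons, List.prod_cons, map_mul, Module.End.mul_apply,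
        ih (List.pairwise_cons.1 hsort).2 (fun a ha => hlt a (List.mem_cons_of_mem i ha)),
        rho_u, UU_apply, dif_neg hnotin, hsgn, one_smul]
      exact EE_congr _ _ (by simp [Finset.union_insert]) (by simp [Finset.union_insert])

def phi (m : ℕ) : RAlg m →ₗ[ℤ] MM m :=
  (LinearMap.applyₗ (EE (∅ : Finset (Fin m)) ∅ (le_refl _))).comp (rho m).toLinearMap

lemma phi_monomial (m : ℕ) (p : Idx m) : phi m (rMonomial m p) = Finsupp.single p 1 := by
  obtain ⟨⟨σ, ω⟩, hp⟩ := p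
  have hphi : ∀ x, phi m x = rho m x (EE ∅ ∅ (le_refl _)) := fun x => rfl
  rw [hphi, rMonomial, map_mul, Module.End.mul_apply, tProd,
    rho_t_list m _ ∅ ∅ (le_refl _) (by simp), uProd,
    rho_u_list m _ ∅ _ (by simp) (Finset.sortedLT_sort σ).pairwise (by simp)]
  have e1 : (∅ : Finset (Fin m)) ∪ (σ.sort (· ≤ ·)).toFinset = σ := by
    simp [Finset.sort_toFinset]
  have e2 : (∅ : Finset (Fin m)) ∪ ((ω \ σ).sort (· ≤ ·)).toFinset ∪
      (σ.sort (· ≤ ·)).toFinset = ω := by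
    simp only [Finset.sort_toFinset, Finset.empty_union]
    rw [Finset.union_comm, Finset.union_sdiff_of_subset hp]
  rw [EE_congr _ ((e1 ▸ e2 ▸ Finset.union_subset_union (by simp) (le_refl _)) :
      σ ⊆ ω) e1 e2, EE]

lemma rMonomial_linearIndependent (m : ℕ) : LinearIndependent ℤ (rMonomial m) := by
  have h1 : LinearIndependent ℤ (fun p : Idx m => Finsupp.single p (1 : ℤ)) := by
    have := (Finsupp.basisSingleOne (R := ℤ) (ι := Idx m)).linearIndependent
    simpa using this
  apply LinearIndependent.of_comp (phi m)
  have : (⇑(phi m) ∘ rMonomial m) = fun p : Idx m => Finsupp.single p (1 : ℤ) := by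
    funext p; exact phi_monomial m p
  rw [this]; exact h1

variable {m : ℕ}

lemma q_ut (i : Fin m) : uq m i * tq m i = uq m i := by
  have := RingQuot.mkRingHom_rel (RRel.ut_same (m := m) i)
  simpa [uq, tq, map_mul] using this

lemma q_tu (i : Fin m) : tq m i * uq m i = 0 := by
  have := RingQuot.mkRingHom_rel (RRel.tu_same (m := m) i)
  simpa [uq, tq, map_mul] using this

lemma q_utc {i j : Fin m} (h : i ≠ j) : uq m i * tq m j = tq m j * uq m i := by
  have := RingQuot.mkRingHom_rel (RRel.ut_comm (m := m) h)
  simpa [uq, tq, map_mul] using this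

lemma q_tt (i : Fin m) : tq m i * tq m i = tq m i := by
  have := RingQuot.mkRingHom_rel (RRel.tt_same (m := m) i)
  simpa [uq, tq, map_mul] using this

lemma q_uu (i : Fin m) : uq m i * uq m i = 0 := by
  have := RingQuot.mkRingHom_rel (RRel.uu_same (m := m) i)
  simpa [uq, tq, map_mul] using this

lemma q_uua {i j : Fin m} (h : i ≠ j) : uq m i * uq m j = -(uq m j * uq m i) := by
  have := RingQuot.mkRingHom_rel (RRel.uu_anti (m := m) h)
  simpa [uq, tq, map_mul] using this

lemma q_ttc (i j : Fin m) : tq m i * tq m j = tq m j * tq m i := by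
  have := RingQuot.mkRingHom_rel (RRel.tt_comm (m := m) i j)
  simpa [uq, tq, map_mul] using this

lemma commute_t_UL {i : Fin m} {l : List (Fin m)} (h : i ∉ l) :
    Commute (tq m i) ((l.map (uq m)).prod) := by
  apply Commute.list_prod_right
  intro x hx
  rcases List.mem_map.1 hx with ⟨j, hj, rfl⟩
  have hij : j ≠ i := fun e => h (e ▸ hj)
  exact (q_utc hij).symm

lemma t_mul_UL_eq_zero {i : Fin m} {l : List (Fin m)} (h : i ∈ l) :
    tq m i * (l.map (uq m)).prod = 0 := by
  induction l with
  | nil => simp at h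
  | cons j l ih =>
      rw [List.map_cons, List.prod_cons, ← mul_assoc]
      by_cases hj : j = i
      · subst hj; rw [q_tu, zero_mul]
      · have hi : i ∈ l := by
          rcases List.mem_cons.1 h with e | e
          · exact absurd e.symm hj
          · exact e
        rw [← q_utc hj, mul_assoc, ih hi, mul_zero]

lemma UL_mul_t_eq_self {i : Fin m} {l : List (Fin m)} (h : i ∈ l) :
    (l.map (uq m)).prod * tq m i = (l.map (uq m)).prod := by
  induction l with
  | nil => simp at h
  | cons j l ih =>
      rw [List.map_cons, List.prod_cons, mul_assoc]
      by_cases hl : i ∈ l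
      · rw [ih hl]
      · have hj : j = i := by
          rcases List.mem_cons.1 h with e | e
          · exact e.symm
          · exact absurd e hl
        subst hj
        rw [← (commute_t_UL hl).eq, ← mul_assoc, q_ut]

lemma u_mul_UL_eq_zero {i : Fin m} {l : List (Fin m)} (h : i ∈ l) :
    uq m i * (l.map (uq m)).prod = 0 := by
  induction l with
  | nil => simp at h
  | cons j l ih =>
      rw [List.map_cons, List.prod_cons, ← mul_assoc]
      by_cases hj : j = i
      · subst hj; rw [q_uu, zero_mul]
      · have hi : i ∈ l := by
          rcases List.mem_cons.1 h with e | e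
          · exact absurd e.symm hj
          · exact e
        calc uq m i * uq m j * (List.map (uq m) l).prod
            = -(uq m j * uq m i) * (List.map (uq m) l).prod := by
              rw [q_uua (fun e => hj e.symm)]
          _ = -(uq m j * uq m i * (List.map (uq m) l).prod) := by
              exact neg_mul (uq m j * uq m i) ((List.map (uq m) l).prod)
          _ = -(uq m j * (uq m i * (List.map (uq m) l).prod)) :=
              congrArg Neg.neg (mul_assoc _ _ _)
          _ = -(uq m j * 0) := by rw [ih hi]
          _ = 0 := (congrArg Neg.neg (mul_zero _)).trans neg_zero

lemma t_mul_TL_mem {i : Fin m} {l : List (Fin m)} (h : i ∈ l) :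
    tq m i * (l.map (tq m)).prod = (l.map (tq m)).prod := by
  induction l with
  | nil => simp at h
  | cons j l ih =>
      rw [List.map_cons, List.prod_cons, ← mul_assoc]
      by_cases hj : j = i
      · subst hj; rw [q_tt]
      · have hi : i ∈ l := by
          rcases List.mem_cons.1 h with e | e
          · exact absurd e.symm hj
          · exact e
        rw [q_ttc, mul_assoc, ih hi]

lemma UL_perm {l l' : List (Fin m)} (h : l.Perm l') :
    (l.map (uq m)).prod = (l'.map (uq m)).prod ∨
      (l.map (uq m)).prod = -((l'.map (uq m)).prod) := by
  induction h with
  | nil => left; rfl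
  | cons x h ih =>
      rcases ih with e | e
      · left; rw [List.map_cons, List.prod_cons, e, List.map_cons, List.prod_cons]
      · right
        rw [List.map_cons, List.prod_cons, e, List.map_cons, List.prod_cons]
        exact mul_neg (uq m x) _
  | swap x y l =>
      by_cases hxy : x = y
      · subst hxy; left; rfl
      · right
        simp only [List.map_cons, List.prod_cons, ← mul_assoc]
        rw [q_uua hxy]
        have h2 : -(uq m y * uq m x) * (List.map (uq m) l).prod =
            -(uq m y * uq m x * (List.map (uq m) l).prod) := neg_mul (uq m y * uq m x) _
        rw [h2]
        exact (neg_neg _).symm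
  | trans h1 h2 ih1 ih2 =>
      rcases ih1 with e1 | e1 <;> rcases ih2 with e2 | e2
      · left; rw [e1, e2]
      · right; rw [e1, e2]
      · right; rw [e1, e2]
      · left; rw [e1, e2]; exact neg_neg _

lemma TL_perm {l l' : List (Fin m)} (h : l.Perm l') :
    (l.map (tq m)).prod = (l'.map (tq m)).prod := by
  induction h with
  | nil => rfl
  | cons x h ih => rw [List.map_cons, List.prod_cons, ih, List.map_cons, List.prod_cons]
  | swap x y l =>
      simp only [List.map_cons, List.prod_cons, ← mul_assoc]
      rw [q_ttc]
  | trans h1 h2 ih1 ih2 => rw [ih1, ih2]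

lemma t_mul_tProd (i : Fin m) (τ : Finset (Fin m)) :
    tq m i * tProd m τ = tProd m (insert i τ) := by
  by_cases hi : i ∈ τ
  · rw [Finset.insert_eq_self.2 hi, tProd]
    exact t_mul_TL_mem ((Finset.mem_sort _).2 hi)
  · have hperm : ((insert i τ).sort (· ≤ ·)).Perm (i :: τ.sort (· ≤ ·)) := by
      refine (Finset.sort_perm_toList _ _).trans ?_
      refine (Finset.toList_insert hi).trans ?_
      exact List.Perm.cons i (Finset.sort_perm_toList _ _).symm
    rw [tProd, tProd, TL_perm hperm, List.map_cons, List.prod_cons]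

lemma uProd_insert {i : Fin m} {σ : Finset (Fin m)} (hi : i ∉ σ) :
    uProd m (insert i σ) = uq m i * uProd m σ ∨
      uProd m (insert i σ) = -(uq m i * uProd m σ) := by
  have hperm : ((insert i σ).sort (· ≤ ·)).Perm (i :: σ.sort (· ≤ ·)) := by
    refine (Finset.sort_perm_toList _ _).trans ?_
    refine (Finset.toList_insert hi).trans ?_
    exact List.Perm.cons i (Finset.sort_perm_toList _ _).symm
  have := UL_perm hperm
  rw [List.map_cons, List.prod_cons] at this
  exact this

lemma t_mul_uProd_zero {i : Fin m} {σ : Finset (Fin m)} (h : i ∈ σ) :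
    tq m i * uProd m σ = 0 := t_mul_UL_eq_zero ((Finset.mem_sort _).2 h)

lemma u_mul_uProd_zero {i : Fin m} {σ : Finset (Fin m)} (h : i ∈ σ) :
    uq m i * uProd m σ = 0 := u_mul_UL_eq_zero ((Finset.mem_sort _).2 h)

lemma t_uProd_comm {i : Fin m} {σ : Finset (Fin m)} (h : i ∉ σ) :
    tq m i * uProd m σ = uProd m σ * tq m i :=
  (commute_t_UL (fun hc => h ((Finset.mem_sort _).1 hc))).eq

lemma uProd_mul_t {i : Fin m} {σ : Finset (Fin m)} (h : i ∈ σ) :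
    uProd m σ * tq m i = uProd m σ := UL_mul_t_eq_self ((Finset.mem_sort _).2 h)

lemma one_eq_rMonomial : rMonomial m ⟨(∅, ∅), le_refl _⟩ = 1 := by
  simp [rMonomial, uProd, tProd, Finset.sort_empty]

lemma t_mul_mono (i : Fin m) (p : Idx m) :
    tq m i * rMonomial m p ∈ Submodule.span ℤ (Set.range (rMonomial m)) := by
  obtain ⟨⟨σ, ω⟩, hp⟩ := p
  by_cases hi : i ∈ σ
  · show tq m i * (uProd m σ * tProd m (ω \ σ)) ∈ _
    rw [← mul_assoc, t_mul_uProd_zero hi, zero_mul]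
    exact zero_mem _
  · show tq m i * (uProd m σ * tProd m (ω \ σ)) ∈ _
    rw [← mul_assoc, t_uProd_comm hi, mul_assoc, t_mul_tProd]
    have he : insert i (ω \ σ) = (insert i ω) \ σ := by
      ext a
      by_cases ha : a = i <;> simp [ha, hi]
    rw [he]
    exact Submodule.subset_span
      ⟨⟨(σ, insert i ω), hp.trans (Finset.subset_insert _ _)⟩, rfl⟩

lemma u_mul_mono (i : Fin m) (p : Idx m) :
    uq m i * rMonomial m p ∈ Submodule.span ℤ (Set.range (rMonomial m)) := by
  obtain ⟨⟨σ, ω⟩, hp⟩ := p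
  by_cases hi : i ∈ σ
  · show uq m i * (uProd m σ * tProd m (ω \ σ)) ∈ _
    rw [← mul_assoc, u_mul_uProd_zero hi, zero_mul]
    exact zero_mem _
  · have key : ∃ (ω' : Finset (Fin m)) (h' : insert i σ ⊆ ω'),
        uProd m (insert i σ) * tProd m (ω \ σ) = rMonomial m ⟨(insert i σ, ω'), h'⟩ := by
      by_cases hw : i ∈ ω
      · refine ⟨ω, Finset.insert_subset hw hp, ?_⟩
        have hiτ : i ∈ ω \ σ := Finset.mem_sdiff.2 ⟨hw, hi⟩
        have e1 : ω \ insert i σ = (ω \ σ).erase i := by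
          ext a
          by_cases ha : a = i <;> simp [ha, Finset.mem_sdiff, and_comm]
        have habs : tq m i * tProd m ((ω \ σ).erase i) = tProd m (ω \ σ) := by
          rw [t_mul_tProd, Finset.insert_erase hiτ]
        calc uProd m (insert i σ) * tProd m (ω \ σ)
            = uProd m (insert i σ) * (tq m i * tProd m ((ω \ σ).erase i)) := by rw [habs]
          _ = uProd m (insert i σ) * tq m i * tProd m ((ω \ σ).erase i) :=
              (mul_assoc _ _ _).symm
          _ = uProd m (insert i σ) * tProd m ((ω \ σ).erase i) := by
              rw [uProd_mul_t (Finset.mem_insert_self i σ)]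
          _ = uProd m (insert i σ) * tProd m (ω \ insert i σ) := by rw [e1]
      · refine ⟨insert i ω, Finset.insert_subset_insert i hp, ?_⟩
        have e2 : (insert i ω) \ (insert i σ) = ω \ σ := by
          ext a
          by_cases ha : a = i <;> simp [ha, hi, hw]
        show _ = uProd m (insert i σ) * tProd m ((insert i ω) \ (insert i σ))
        rw [e2]
    obtain ⟨ω', h', hkey⟩ := key
    show uq m i * (uProd m σ * tProd m (ω \ σ)) ∈ _
    rcases uProd_insert hi with e | e
    · rw [← mul_assoc, ← e, hkey]
      exact Submodule.subset_span ⟨_, rfl⟩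
    · have e' : uq m i * uProd m σ = -uProd m (insert i σ) := by
        rw [e]; exact (neg_neg _).symm
      rw [← mul_assoc, e']
      have e'' : -uProd m (insert i σ) * tProd m (ω \ σ) =
          -(uProd m (insert i σ) * tProd m (ω \ σ)) := neg_mul (uProd m (insert i σ)) _
      rw [e'', hkey]
      exact neg_mem (Submodule.subset_span ⟨_, rfl⟩)

lemma rMonomial_span_top (m : ℕ) :
    Submodule.span ℤ (Set.range (rMonomial m)) = ⊤ := by
  set S := Submodule.span ℤ (Set.range (rMonomial m)) with hS
  let A : Subalgebra ℤ (RAlg m) :=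
    { carrier := {x | ∀ s ∈ S, x * s ∈ S}
      mul_mem' := fun {x y} hx hy s hs => by
        rw [mul_assoc]; exact hx _ (hy _ hs)
      add_mem' := fun {x y} hx hy s hs => by
        rw [add_mul]; exact add_mem (hx s hs) (hy s hs)
      algebraMap_mem' := fun r s hs => by
        rw [← Algebra.smul_def]; exact Submodule.smul_mem _ r hs }
  have hu : ∀ i, uq m i ∈ A := by
    intro i s hs
    induction hs using Submodule.span_induction with
    | mem x hx => obtain ⟨p, rfl⟩ := hx; exact u_mul_mono i p
    | zero => rw [mul_zero]; exact zero_mem _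
    | add x y _ _ hx hy => rw [mul_add]; exact add_mem hx hy
    | smul r x _ hx => rw [mul_smul_comm]; exact Submodule.smul_mem _ r hx
  have ht : ∀ i, tq m i ∈ A := by
    intro i s hs
    induction hs using Submodule.span_induction with
    | mem x hx => obtain ⟨p, rfl⟩ := hx; exact t_mul_mono i p
    | zero => rw [mul_zero]; exact zero_mem _
    | add x y _ _ hx hy => rw [mul_add]; exact add_mem hx hy
    | smul r x _ hx => rw [mul_smul_comm]; exact Submodule.smul_mem _ r hx
  have hall : ∀ x : RAlg m, x ∈ A := by
    intro x
    obtain ⟨y, rfl⟩ := RingQuot.mkAlgHom_surjective ℤ (RRel m) x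
    induction y using FreeAlgebra.induction with
    | grade0 r => rw [AlgHom.commutes]; exact A.algebraMap_mem r
    | grade1 z =>
        rcases z with i | i
        · rw [mkAlgHom_eq]; exact hu i
        · rw [mkAlgHom_eq]; exact ht i
    | mul a b ha hb => rw [map_mul]; exact A.mul_mem ha hb
    | add a b ha hb => rw [map_add]; exact A.add_mem ha hb
  rw [eq_top_iff]
  intro x _
  have h1 : (1 : RAlg m) ∈ S := by
    rw [← one_eq_rMonomial]; exact Submodule.subset_span ⟨_, rfl⟩
  have := hall x 1 h1
  rwa [mul_one] at this

/-- as a ℤ-module, `R` is free with basis the square-free monomials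
`u_σ t_{ω∖σ}` for `σ ⊆ ω ⊆ [m]`. -/
theorem rAlg_free_on_monomials (m : ℕ) :
    LinearIndependent ℤ (rMonomial m) ∧
    Submodule.span ℤ (Set.range (rMonomial m)) = ⊤ := by
  exact ⟨rMonomial_linearIndependent m, rMonomial_span_top m⟩

end
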